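/- Let V be a graded vector space with a PBW-type basis as above, where exactly m of the bounds Ñ_k are infinite. Then the formal power series H_V(T), viewed as a rational function, has a pole of order exactly m at T = 1; consequently any graded algebra with such a basis has Gelfand-Kirillov dimension equal to m (the number of indices k with Ñ_k = ∞). -/

import Mathlib

open PowerSeries Finset
open scoped Classical

namespace HilbAux

noncomputable def geomPS (a : ℕ) : PowerSeries ℚ :=
  PowerSeries.mk fun n => if a ∣ n then 1 else 0

lemma one_sub_X_pow_mul_geomPS (a : ℕ) (ha : 0 < a) :
    (1 - (X : PowerSeries ℚ) ^ a) * geomPS a = 1 := by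
  ext n
  rw [sub_mul, one_mul, map_sub, mul_comm, PowerSeries.coeff_mul_X_pow']
  simp only [geomPS, PowerSeries.coeff_mk, PowerSeries.coeff_one]
  rcases eq_or_ne n 0 with rfl | hn
  · simp [Nat.le_zero, ha.ne']
  · simp only [hn, if_false]
    by_cases hdvd : a ∣ n
    · have han : a ≤ n := Nat.le_of_dvd (Nat.pos_of_ne_zero hn) hdvd
      have : a ∣ n - a := (Nat.dvd_sub hdvd dvd_rfl)
      simp [hdvd, han, this]
    · by_cases han : a ≤ n
      · have : ¬ a ∣ n - a := fun h => hdvd (by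
          have := Nat.dvd_add h (dvd_refl a)
          rwa [Nat.sub_add_cancel han] at this)
        simp [hdvd, han, this]
      · simp [hdvd, han]

lemma count_eq (M : ℕ) (Nbar : Fin M → ℕ∞) (d : Fin M → ℕ) (hd : ∀ i, 0 < d i) (n : ℕ) :
    Nat.card {h : Fin M → ℕ // (∀ i, (h i : ℕ∞) < Nbar i) ∧ ∑ i, h i * d i = n}
      = ((finsuppAntidiag (univ : Finset (Fin M)) n).filter
          (fun l => ∀ k, ∃ h : ℕ, (h : ℕ∞) < Nbar k ∧ h * d k = l k)).card := by
  rw [← Nat.card_eq_finsetCard]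
  apply Nat.card_congr
  refine ⟨fun h => ⟨Finsupp.equivFunOnFinite.symm fun k => h.1 k * d k, ?_⟩,
          fun l => ⟨fun k => l.1 k / d k, ?_⟩, ?_, ?_⟩
  · obtain ⟨h, hlt, hsum⟩ := h
    simp only [mem_filter, mem_finsuppAntidiag]
    refine ⟨⟨?_, subset_univ _⟩, fun k => ⟨h k, hlt k, rfl⟩⟩
    simpa [Finsupp.equivFunOnFinite] using hsum
  · obtain ⟨l, hl⟩ := l
    simp only [mem_filter, mem_finsuppAntidiag] at hl
    obtain ⟨⟨hsum, -⟩, hP⟩ := hl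
    constructor
    · intro i
      obtain ⟨h, hlt, hh⟩ := hP i
      have hq : (l : Fin M → ℕ) i / d i = h := by
        rw [← hh, Nat.mul_div_cancel h (hd i)]
      simpa [hq] using hlt
    · have : ∀ k, l k / d k * d k = l k := by
        intro k
        obtain ⟨h, hlt, hh⟩ := hP k
        rw [← hh, Nat.mul_div_cancel h (hd k)]
      simp only [this]
      exact hsum
  · rintro ⟨h, hh⟩
    ext k
    simp [Nat.mul_div_cancel _ (hd k)]
  · rintro ⟨l, hl⟩
    simp only [mem_filter, mem_finsuppAntidiag] at hl
    obtain ⟨-, hP⟩ := hl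
    ext k
    obtain ⟨h, hlt, hh⟩ := hP k
    simp only [Finsupp.equivFunOnFinite]
    simp [← hh, Nat.mul_div_cancel _ (hd k)]

end HilbAux

namespace HilbAux

lemma mk_eq_prod (M : ℕ) (Nbar : Fin M → ℕ∞) (d : Fin M → ℕ) (n : ℕ) :
    (((((finsuppAntidiag (univ : Finset (Fin M)) n).filter
          (fun l => ∀ k, ∃ h : ℕ, (h : ℕ∞) < Nbar k ∧ h * d k = l k)).card : ℕ)) : ℚ)
      = PowerSeries.coeff n (∏ k : Fin M,
          PowerSeries.mk (fun j => if ∃ h : ℕ, (h : ℕ∞) < Nbar k ∧ h * d k = j then (1:ℚ) else 0)) := by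
  rw [PowerSeries.coeff_prod]
  simp only [PowerSeries.coeff_mk]
  rw [Finset.sum_congr rfl (fun l _ => Finset.prod_boole (s := univ)
        (p := fun k => ∃ h : ℕ, (h : ℕ∞) < Nbar k ∧ h * d k = l k))]
  rw [Finset.card_filter, Nat.cast_sum]
  apply Finset.sum_congr rfl
  intro l _
  simp [apply_ite]

lemma Ek_top (N : ℕ∞) (hN : N = ⊤) (a : ℕ) (ha : 0 < a) :
    PowerSeries.mk (fun n => if ∃ h : ℕ, (h : ℕ∞) < N ∧ h * a = n then (1:ℚ) else 0)
      = geomPS a := by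
  subst hN
  ext n
  simp only [PowerSeries.coeff_mk, geomPS]
  congr 1
  simp only [ENat.coe_lt_top, true_and, eq_iff_iff]
  constructor
  · rintro ⟨h, rfl⟩; exact Dvd.intro_left h rfl
  · rintro ⟨c, rfl⟩; exact ⟨c, mul_comm c a⟩

lemma Ek_fin (N : ℕ∞) (hN : N ≠ ⊤) (a : ℕ) (ha : 0 < a) :
    PowerSeries.mk (fun n => if ∃ h : ℕ, (h : ℕ∞) < N ∧ h * a = n then (1:ℚ) else 0)
      = (((∑ j ∈ range N.toNat, Polynomial.X ^ (j * a) : Polynomial ℚ)) : PowerSeries ℚ) := by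
  have hcast : ∀ h : ℕ, ((h : ℕ∞) < N ↔ h < N.toNat) := by
    intro h
    conv_lhs => rw [← ENat.coe_toNat hN]
    exact_mod_cast Iff.rfl
  ext n
  rw [Polynomial.coeff_coe, Polynomial.finset_sum_coeff, PowerSeries.coeff_mk]
  simp only [Polynomial.coeff_X_pow]
  by_cases hex : ∃ h : ℕ, (h : ℕ∞) < N ∧ h * a = n
  · obtain ⟨h, hlt, rfl⟩ := hex
    rw [if_pos ⟨h, hlt, rfl⟩]
    rw [Finset.sum_eq_single_of_mem h (mem_range.mpr ((hcast h).mp hlt))]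
    · simp
    · intro j _ hj
      rw [if_neg]
      intro hcon
      exact hj (Nat.eq_of_mul_eq_mul_right ha hcon.symm)
  · rw [if_neg hex]
    refine (Finset.sum_eq_zero ?_).symm
    intro j hj
    rw [if_neg]
    intro hcon
    exact hex ⟨j, (hcast j).mpr (mem_range.mp hj), hcon.symm⟩

lemma geom_factor (a : ℕ) :
    ((∑ j ∈ range a, Polynomial.X ^ j : Polynomial ℚ) : PowerSeries ℚ) * (1 - X) = 1 - X ^ a := by
  have h : (∑ j ∈ range a, Polynomial.X ^ j : Polynomial ℚ) * (1 - Polynomial.X)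
      = 1 - Polynomial.X ^ a := by
    have := geom_sum_mul (Polynomial.X : Polynomial ℚ) a
    linear_combination -this
  have h2 := congrArg (Polynomial.coeToPowerSeries.ringHom (R := ℚ)) h
  have h3 : ((∑ j ∈ range a, Polynomial.X ^ j : Polynomial ℚ) : PowerSeries ℚ)
      = ∑ j ∈ range a, (X : PowerSeries ℚ) ^ j := by
    rw [← Polynomial.coeToPowerSeries.ringHom_apply, map_sum]
    simp [Polynomial.coe_X]
  rw [h3]
  simpa [map_sub, map_mul, map_pow, map_sum, Polynomial.coeToPowerSeries.ringHom_apply,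
    Polynomial.coe_X, Polynomial.coe_one] using h2

end HilbAux

namespace HilbAux
open Finset Filter Topology

lemma partB (M : ℕ) (Nbar : Fin M → ℕ∞) (hNbar : ∀ i, Nbar i ≠ 0) (d : Fin M → ℕ)
    (hd : ∀ i, 0 < d i) (m : ℕ) (hm : m = (univ.filter fun i => Nbar i = ⊤).card)
    (D : ℕ → ℕ)
    (hDc : ∀ n, D n = ((finsuppAntidiag (univ : Finset (Fin M)) n).filter
          (fun l => ∀ k, ∃ h : ℕ, (h : ℕ∞) < Nbar k ∧ h * d k = l k)).card) :
    Filter.atTop.limsup (fun n : ℕ =>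
        Real.log (∑ i ∈ range (n + 1), (D i : ℝ)) / Real.log n) = (m : ℝ) := by
  classical
  set S : Finset (Fin M) := univ.filter fun i => Nbar i = ⊤ with hS
  set P : (Fin M →₀ ℕ) → Prop := fun l => ∀ k, ∃ h : ℕ, (h : ℕ∞) < Nbar k ∧ h * d k = l k
    with hP
  set A : ℕ → Finset (Fin M →₀ ℕ) := fun i => (finsuppAntidiag univ i).filter P with hA
  set T : ℕ → Finset (Fin M →₀ ℕ) := fun n => (range (n+1)).biUnion A with hT
  have hmemS : ∀ k, k ∈ S ↔ Nbar k = ⊤ := by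
    intro k; simp [hS]
  have hmemSc : ∀ k, k ∈ Sᶜ ↔ Nbar k ≠ ⊤ := by
    intro k; simp [hS]
  have hsum : ∀ n, ∑ i ∈ range (n+1), D i = (T n).card := by
    intro n
    rw [hT, Finset.card_biUnion]
    · exact Finset.sum_congr rfl fun i _ => hDc i
    · intro i _ j _ hij
      apply Finset.disjoint_left.mpr
      intro l hli hlj
      simp only [hA, mem_filter, mem_finsuppAntidiag] at hli hlj
      exact hij (hli.1.1.symm.trans hlj.1.1)
  have hmemT : ∀ {n : ℕ} {l : Fin M →₀ ℕ}, l ∈ T n → (∑ k, l k) ≤ n ∧ P l := by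
    intro n l hl
    simp only [hT, mem_biUnion, mem_range] at hl
    obtain ⟨i, hi, hl⟩ := hl
    simp only [hA, mem_filter, mem_finsuppAntidiag] at hl
    refine ⟨?_, hl.2⟩
    calc ∑ k, l k = i := hl.1.1
      _ ≤ n := by omega
  set C : ℕ := ∏ k ∈ Sᶜ, (Nbar k).toNat with hC
  have hCpos : 0 < C := by
    apply Finset.prod_pos
    intro k hk
    refine Nat.pos_of_ne_zero ?_
    rw [Ne, ENat.toNat_eq_zero]
    push_neg
    exact ⟨hNbar k, (hmemSc k).mp hk⟩
  -- upper bound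
  have hub : ∀ n, (T n).card ≤ C * (n+1)^m := by
    intro n
    have hmaps : ∀ l ∈ T n, (fun k => l k / d k) ∈
        Fintype.piFinset fun k => range (if Nbar k = ⊤ then n+1 else (Nbar k).toNat) := by
      intro l hl
      obtain ⟨hln, hPl⟩ := hmemT hl
      rw [Fintype.mem_piFinset]
      intro k
      obtain ⟨h, hlt, heq⟩ := hPl k
      have hq : l k / d k = h := by rw [← heq, Nat.mul_div_cancel h (hd k)]
      rw [mem_range, hq]
      by_cases htop : Nbar k = ⊤
      · rw [if_pos htop]
        have h1 : h ≤ h * d k := Nat.le_mul_of_pos_right h (hd k)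
        have h2 : l k ≤ ∑ k, l k :=
          Finset.single_le_sum (fun i _ => Nat.zero_le (l i)) (mem_univ k)
        omega
      · rw [if_neg htop]
        have := (ENat.coe_toNat htop) ▸ hlt
        exact_mod_cast this
    have hinj : Set.InjOn (fun (l : Fin M →₀ ℕ) (k : Fin M) => l k / d k) (T n) := by
      intro l1 h1 l2 h2 heq
      obtain ⟨-, hP1⟩ := hmemT h1
      obtain ⟨-, hP2⟩ := hmemT h2
      ext k
      obtain ⟨a, -, ha⟩ := hP1 k
      obtain ⟨b, -, hb⟩ := hP2 k
      have hab : l1 k / d k = l2 k / d k := congrFun heq k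
      rw [← ha, ← hb, Nat.mul_div_cancel a (hd k), Nat.mul_div_cancel b (hd k)] at hab
      rw [← ha, ← hb, hab]
    calc (T n).card
        ≤ (Fintype.piFinset fun k => range (if Nbar k = ⊤ then n+1 else (Nbar k).toNat)).card :=
          Finset.card_le_card_of_injOn _ hmaps hinj
      _ = ∏ k, (if Nbar k = ⊤ then n+1 else (Nbar k).toNat) := by
          rw [Fintype.card_piFinset]
          exact Finset.prod_congr rfl fun k _ => card_range _
      _ = C * (n+1)^m := by
          rw [← Finset.prod_mul_prod_compl S]
          have h1 : ∏ k ∈ S, (if Nbar k = ⊤ then n+1 else (Nbar k).toNat) = (n+1)^m := by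
            rw [Finset.prod_congr rfl fun k hk => if_pos ((hmemS k).mp hk), Finset.prod_const, hm]
          have h2 : ∏ k ∈ Sᶜ, (if Nbar k = ⊤ then n+1 else (Nbar k).toNat) = C := by
            rw [hC]
            exact Finset.prod_congr rfl fun k hk => if_neg ((hmemSc k).mp hk)
          rw [h1, h2, mul_comm]
  -- lower bound
  have hlb : ∀ n, ∏ k ∈ S, (n / (M * d k) + 1) ≤ (T n).card := by
    intro n
    have hmaps : ∀ h ∈ (Fintype.piFinset fun k =>
          range (if Nbar k = ⊤ then n / (M * d k) + 1 else 1)),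
        (Finsupp.equivFunOnFinite.symm fun k => h k * d k) ∈ T n := by
      intro h hh
      rw [Fintype.mem_piFinset] at hh
      simp only [mem_range] at hh
      have hzero : ∀ k ∈ Sᶜ, h k = 0 := by
        intro k hk
        have := hh k
        rw [if_neg ((hmemSc k).mp hk)] at this
        omega
      have hSM : S.card ≤ M := by
        refine le_trans (Finset.card_le_univ S) ?_
        simp
      have hsumle : ∑ k, h k * d k ≤ n := by
        have hzero' : ∑ k ∈ Sᶜ, h k * d k = 0 :=
          Finset.sum_eq_zero fun k hk => by rw [hzero k hk, zero_mul]
        have hone : ∀ k ∈ S, h k * d k ≤ n / M := by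
          intro k hk
          have hhk : h k ≤ n / (M * d k) := by
            have := hh k
            rw [if_pos ((hmemS k).mp hk)] at this
            omega
          calc h k * d k ≤ n / (M * d k) * d k := Nat.mul_le_mul_right _ hhk
            _ = n / M / d k * d k := by rw [Nat.div_div_eq_div_mul]
            _ ≤ n / M := Nat.div_mul_le_self _ _
        calc ∑ k, h k * d k = ∑ k ∈ S, h k * d k + ∑ k ∈ Sᶜ, h k * d k :=
              (Finset.sum_add_sum_compl S _).symm
          _ = ∑ k ∈ S, h k * d k := by rw [hzero', add_zero]
          _ ≤ ∑ k ∈ S, n / M := Finset.sum_le_sum hone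
          _ = S.card * (n / M) := by rw [Finset.sum_const, smul_eq_mul]
          _ ≤ M * (n / M) := Nat.mul_le_mul_right _ hSM
          _ ≤ n := by rw [mul_comm]; exact Nat.div_mul_le_self n M
      simp only [hT, mem_biUnion, mem_range]
      refine ⟨∑ k, h k * d k, by omega, ?_⟩
      simp only [hA, mem_filter, mem_finsuppAntidiag]
      refine ⟨⟨?_, subset_univ _⟩, ?_⟩
      · simp [Finsupp.equivFunOnFinite]
      · intro k
        refine ⟨h k, ?_, by simp [Finsupp.equivFunOnFinite]⟩
        by_cases htop : Nbar k = ⊤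
        · rw [htop]
          exact Ne.lt_top (ENat.coe_ne_top _)
        · have h0 : h k = 0 := hzero k ((hmemSc k).mpr htop)
          rw [h0]
          simpa using pos_iff_ne_zero.mpr (hNbar k)
    have hinj : Set.InjOn (fun h : Fin M → ℕ => Finsupp.equivFunOnFinite.symm fun k => h k * d k)
        ((Fintype.piFinset fun k => range (if Nbar k = ⊤ then n / (M * d k) + 1 else 1)) :
          Finset (Fin M → ℕ)) := by
      intro h1 _ h2 _ heq
      funext k
      have hk : h1 k * d k = h2 k * d k := by
        have := congrArg (fun l : Fin M →₀ ℕ => l k) heq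
        simpa [Finsupp.equivFunOnFinite] using this
      exact Nat.eq_of_mul_eq_mul_right (hd k) hk
    calc ∏ k ∈ S, (n / (M * d k) + 1)
        = (Fintype.piFinset fun k => range (if Nbar k = ⊤ then n / (M * d k) + 1 else 1)).card := by
          rw [Fintype.card_piFinset]
          simp only [card_range]
          rw [← Finset.prod_mul_prod_compl S]
          have h1 : ∏ k ∈ S, (if Nbar k = ⊤ then n / (M * d k) + 1 else 1)
              = ∏ k ∈ S, (n / (M * d k) + 1) :=
            Finset.prod_congr rfl fun k hk => if_pos ((hmemS k).mp hk)
          have h2 : ∏ k ∈ Sᶜ, (if Nbar k = ⊤ then n / (M * d k) + 1 else 1) = 1 :=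
            Finset.prod_eq_one fun k hk => if_neg ((hmemSc k).mp hk)
          rw [h1, h2, mul_one]
      _ ≤ (T n).card := Finset.card_le_card_of_injOn _ hmaps hinj
  -- analysis
  have hTpos : ∀ n, 0 < (T n).card := by
    intro n
    exact lt_of_lt_of_le (Finset.prod_pos fun k _ => Nat.succ_pos _) (hlb n)
  set K : ℝ := ∏ k ∈ S, ((M * d k : ℕ) : ℝ) with hK
  have hKpos : 0 < K := by
    refine Finset.prod_pos fun k hk => ?_
    have : 0 < M * d k := Nat.mul_pos k.pos (hd k)
    exact_mod_cast this
  have hlbR : ∀ n : ℕ, ((n:ℝ))^m / K ≤ ((T n).card : ℝ) := by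
    intro n
    have h1 : (((∏ k ∈ S, (n / (M * d k) + 1) : ℕ)) : ℝ) ≤ ((T n).card : ℝ) := by
      exact_mod_cast hlb n
    refine le_trans ?_ h1
    rw [Nat.cast_prod]
    have h2 : ∀ k ∈ S, (n:ℝ) / ((M * d k : ℕ):ℝ) ≤ ((n / (M * d k) + 1 : ℕ) : ℝ) := by
      intro k hk
      have ha : 0 < M * d k := Nat.mul_pos k.pos (hd k)
      have h3 : n < (n / (M * d k) + 1) * (M * d k) :=
        (Nat.div_lt_iff_lt_mul ha).mp (Nat.lt_succ_self _)
      have h4 : (n:ℝ) < ((n / (M * d k) + 1 : ℕ):ℝ) * ((M * d k : ℕ):ℝ) := by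
        exact_mod_cast h3
      rw [div_le_iff₀ (by exact_mod_cast ha)]
      exact le_of_lt h4
    calc (n:ℝ)^m / K = ∏ k ∈ S, ((n:ℝ) / ((M * d k : ℕ):ℝ)) := by
          rw [Finset.prod_div_distrib, Finset.prod_const, hm]
      _ ≤ ∏ k ∈ S, ((n / (M * d k) + 1 : ℕ) : ℝ) :=
          Finset.prod_le_prod (fun k hk => by positivity) h2
  have hubR : ∀ n : ℕ, ((T n).card : ℝ) ≤ (C:ℝ) * ((n:ℝ)+1)^m := by
    intro n
    have := hub n
    exact_mod_cast this
  have hfun : (fun n : ℕ => Real.log (∑ i ∈ range (n + 1), (D i : ℝ)) / Real.log n)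
      = fun n : ℕ => Real.log ((T n).card : ℝ) / Real.log n := by
    funext n
    rw [← Nat.cast_sum, hsum n]
  rw [hfun]
  have hlog : Tendsto (fun n : ℕ => Real.log n) atTop atTop :=
    Real.tendsto_log_atTop.comp tendsto_natCast_atTop_atTop
  have hlow : Tendsto (fun n : ℕ => (m:ℝ) - Real.log K / Real.log n) atTop (𝓝 (m:ℝ)) := by
    have h0 : Tendsto (fun n : ℕ => Real.log K / Real.log n) atTop (𝓝 0) :=
      Filter.Tendsto.div_atTop tendsto_const_nhds hlog
    simpa using (tendsto_const_nhds (x := (m:ℝ))).sub h0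
  have hhigh : Tendsto (fun n : ℕ => (Real.log C + m * Real.log 2) / Real.log n + m)
      atTop (𝓝 (m:ℝ)) := by
    have h0 : Tendsto (fun n : ℕ => (Real.log C + m * Real.log 2) / Real.log n) atTop (𝓝 0) :=
      Filter.Tendsto.div_atTop tendsto_const_nhds hlog
    simpa using h0.add (tendsto_const_nhds (x := (m:ℝ)))
  have hev_low : ∀ᶠ n : ℕ in atTop,
      (m:ℝ) - Real.log K / Real.log n ≤ Real.log ((T n).card : ℝ) / Real.log n := by
    filter_upwards [eventually_ge_atTop 2] with n hn
    have hn0 : (0:ℝ) < n := by exact_mod_cast (by omega : 0 < n)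
    have hn1 : (1:ℝ) < n := by exact_mod_cast (by omega : 1 < n)
    have hlogn : 0 < Real.log n := Real.log_pos hn1
    have hpos : (0:ℝ) < ((n:ℝ))^m / K := div_pos (pow_pos hn0 m) hKpos
    have h1 := Real.log_le_log hpos (hlbR n)
    rw [Real.log_div (ne_of_gt (pow_pos hn0 m)) (ne_of_gt hKpos), Real.log_pow] at h1
    have h5 : ((m:ℝ) * Real.log n - Real.log K) / Real.log n
        ≤ Real.log ((T n).card : ℝ) / Real.log n := by gcongr
    rwa [sub_div, mul_div_cancel_right₀ _ (ne_of_gt hlogn)] at h5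
  have hev_high : ∀ᶠ n : ℕ in atTop,
      Real.log ((T n).card : ℝ) / Real.log n
        ≤ (Real.log C + m * Real.log 2) / Real.log n + m := by
    filter_upwards [eventually_ge_atTop 2] with n hn
    have hn0 : (0:ℝ) < n := by exact_mod_cast (by omega : 0 < n)
    have hn1 : (1:ℝ) < n := by exact_mod_cast (by omega : 1 < n)
    have hn2 : (2:ℝ) ≤ n := by exact_mod_cast hn
    have hlogn : 0 < Real.log n := Real.log_pos hn1
    have hTp : (0:ℝ) < ((T n).card : ℝ) := by exact_mod_cast hTpos n
    have h1 : Real.log ((T n).card : ℝ) ≤ Real.log ((C:ℝ) * ((n:ℝ)+1)^m) :=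
      Real.log_le_log hTp (hubR n)
    have h2 : Real.log ((C:ℝ) * ((n:ℝ)+1)^m) = Real.log C + m * Real.log ((n:ℝ)+1) := by
      rw [Real.log_mul (ne_of_gt (by exact_mod_cast hCpos)) (by positivity), Real.log_pow]
    have h3 : Real.log ((n:ℝ)+1) ≤ Real.log 2 + Real.log n := by
      rw [← Real.log_mul two_ne_zero (ne_of_gt hn0)]
      apply Real.log_le_log (by positivity)
      nlinarith
    have h4 : Real.log ((T n).card : ℝ) ≤ Real.log C + m * Real.log 2 + m * Real.log n := by
      have h3' : (m:ℝ) * Real.log ((n:ℝ)+1) ≤ m * (Real.log 2 + Real.log n) :=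
        mul_le_mul_of_nonneg_left h3 (Nat.cast_nonneg m)
      rw [h2] at h1
      linarith
    have h5 : (Real.log C + (m:ℝ) * Real.log 2 + m * Real.log n) / Real.log n
        = (Real.log C + m * Real.log 2) / Real.log n + m := by
      rw [add_div, mul_div_cancel_right₀ _ (ne_of_gt hlogn)]
    rw [← h5]
    gcongr
  exact (tendsto_of_tendsto_of_tendsto_of_le_of_le' hlow hhigh hev_low hev_high).limsup_eq

end HilbAux

open PowerSeries Finset in
theorem hilbert_series_pole_order_gkdim (M : ℕ) (Nbar : Fin M → ℕ∞)
    (hNbar : ∀ i, Nbar i ≠ 0) (d : Fin M → ℕ) (hd : ∀ i, 0 < d i)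
    (m : ℕ) (hm : m = (Finset.univ.filter fun i => Nbar i = ⊤).card)
    (D : ℕ → ℕ)
    (hD : ∀ n : ℕ, D n =
      Nat.card {h : Fin M → ℕ //
        (∀ i, (h i : ℕ∞) < Nbar i) ∧ ∑ i, h i * d i = n}) :
    (∃ f g : Polynomial ℚ, Polynomial.eval 1 f ≠ 0 ∧ Polynomial.eval 1 g ≠ 0 ∧
      (g : PowerSeries ℚ) * (1 - (PowerSeries.X : PowerSeries ℚ)) ^ m *
        PowerSeries.mk (fun n => (D n : ℚ)) = (f : PowerSeries ℚ)) ∧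
    Filter.atTop.limsup
      (fun n : ℕ =>
        Real.log (∑ i ∈ Finset.range (n + 1), (D i : ℝ)) / Real.log n) = (m : ℝ) := by
  classical
  set S : Finset (Fin M) := univ.filter fun i => Nbar i = ⊤ with hS
  have hDc : ∀ n, D n = ((finsuppAntidiag (univ : Finset (Fin M)) n).filter
          (fun l => ∀ k, ∃ h : ℕ, (h : ℕ∞) < Nbar k ∧ h * d k = l k)).card := by
    intro n; rw [hD n, HilbAux.count_eq M Nbar d hd n]
  set E : Fin M → PowerSeries ℚ := fun k =>
    PowerSeries.mk (fun j => if ∃ h : ℕ, (h : ℕ∞) < Nbar k ∧ h * d k = j then (1:ℚ) else 0)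
    with hE
  have key : PowerSeries.mk (fun n => (D n : ℚ)) = ∏ k : Fin M, E k := by
    ext n
    rw [PowerSeries.coeff_mk, hDc n]
    exact HilbAux.mk_eq_prod M Nbar d n
  constructor
  · refine ⟨∏ k ∈ Sᶜ, ∑ j ∈ range (Nbar k).toNat, Polynomial.X ^ (j * d k),
           ∏ k ∈ S, ∑ j ∈ range (d k), Polynomial.X ^ j, ?_, ?_, ?_⟩
    · rw [Polynomial.eval_prod]
      apply Finset.prod_ne_zero_iff.mpr
      intro k hk
      rw [Polynomial.eval_finset_sum]
      simp only [Polynomial.eval_pow, Polynomial.eval_X, one_pow, Finset.sum_const,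
        Finset.card_range, nsmul_eq_mul, mul_one]
      have hk' : Nbar k ≠ ⊤ := by
        simp only [hS, compl_filter, mem_filter, mem_univ, true_and] at hk
        exact hk
      have hnz : (Nbar k).toNat ≠ 0 := by
        rw [Ne, ENat.toNat_eq_zero]
        push_neg
        exact ⟨hNbar k, hk'⟩
      exact_mod_cast hnz
    · rw [Polynomial.eval_prod]
      apply Finset.prod_ne_zero_iff.mpr
      intro k hk
      rw [Polynomial.eval_finset_sum]
      simp only [Polynomial.eval_pow, Polynomial.eval_X, one_pow, Finset.sum_const,
        Finset.card_range, nsmul_eq_mul, mul_one]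
      exact_mod_cast (hd k).ne'
    · have hg : ((∏ k ∈ S, ∑ j ∈ range (d k), Polynomial.X ^ j : Polynomial ℚ) : PowerSeries ℚ)
          * (1 - (X : PowerSeries ℚ)) ^ m
          = ∏ k ∈ S, (1 - (X : PowerSeries ℚ) ^ (d k)) := by
        rw [hm, ← Finset.prod_const (b := 1 - (X : PowerSeries ℚ)),
          ← Polynomial.coeToPowerSeries.ringHom_apply, map_prod, ← Finset.prod_mul_distrib]
        apply Finset.prod_congr rfl
        intro k _
        rw [Polynomial.coeToPowerSeries.ringHom_apply]
        exact HilbAux.geom_factor (d k)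
      have hEtop : ∀ k ∈ S, E k = HilbAux.geomPS (d k) := by
        intro k hk
        simp only [hS, mem_filter] at hk
        exact HilbAux.Ek_top (Nbar k) hk.2 (d k) (hd k)
      have hEfin : ∀ k ∈ Sᶜ, E k =
          (((∑ j ∈ range (Nbar k).toNat, Polynomial.X ^ (j * d k) : Polynomial ℚ)) :
            PowerSeries ℚ) := by
        intro k hk
        simp only [hS, compl_filter, mem_filter, mem_univ, true_and] at hk
        exact HilbAux.Ek_fin (Nbar k) hk (d k) (hd k)
      have hcancel : (∏ k ∈ S, (1 - (X : PowerSeries ℚ) ^ (d k))) * ∏ k ∈ S, E k = 1 := by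
        rw [← Finset.prod_mul_distrib]
        apply Finset.prod_eq_one
        intro k hk
        rw [hEtop k hk]
        exact HilbAux.one_sub_X_pow_mul_geomPS (d k) (hd k)
      calc ((∏ k ∈ S, ∑ j ∈ range (d k), Polynomial.X ^ j : Polynomial ℚ) : PowerSeries ℚ)
            * (1 - (X : PowerSeries ℚ)) ^ m * PowerSeries.mk (fun n => (D n : ℚ))
          = (∏ k ∈ S, (1 - (X : PowerSeries ℚ) ^ (d k))) * ((∏ k ∈ S, E k) * ∏ k ∈ Sᶜ, E k) := by
            rw [hg, key, Finset.prod_mul_prod_compl S E]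
        _ = ((∏ k ∈ S, (1 - (X : PowerSeries ℚ) ^ (d k))) * ∏ k ∈ S, E k) * ∏ k ∈ Sᶜ, E k := by
            ring
        _ = ∏ k ∈ Sᶜ, E k := by rw [hcancel, one_mul]
        _ = ((∏ k ∈ Sᶜ, ∑ j ∈ range (Nbar k).toNat, Polynomial.X ^ (j * d k) : Polynomial ℚ) :
              PowerSeries ℚ) := by
            rw [← Polynomial.coeToPowerSeries.ringHom_apply, map_prod]
            apply Finset.prod_congr rfl
            intro k hk
            rw [Polynomial.coeToPowerSeries.ringHom_apply]
            exact hEfin k hk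
  · exact HilbAux.partB M Nbar hNbar d hd m hm D hDc
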